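/- Let ℓ : ℝ^d → ℝ be convex and L-Lipschitz, and let f₁,…,f_d : ℝ^{m×p} → ℝ each be differentiable with gradient Lipschitz constant C/b. Define ℓ∘f(θ) = ℓ(f₁(θ[1]),…,f_d(θ[d])) for θ = (θ[1],…,θ[d]). Then for all θ, θ' with ‖θ − θ'‖_F ≤ 2R, we have ℓ(f(θ')) − ℓ(f(θ)) ≥ ⟨∇_θ ℓ(f(θ)), θ'−θ⟩ − 2CLR²/b, i.e. ℓ∘f is (2CLR²/b)-nearly convex on the ball B(R). -/

import Mathlib

open scoped RealInnerProductSpace BigOperators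

section aux

variable {E : Type*} [NormedAddCommGroup E] [InnerProductSpace ℝ E] [CompleteSpace E]

/-- Gradient inequality for a convex function. -/
lemma grad_convex_lb {ℓ : E → ℝ} (hconv : ConvexOn ℝ Set.univ ℓ) {g x : E}
    (hg : HasGradientAt ℓ g x) (y : E) :
    ℓ x + ⟪g, y - x⟫ ≤ ℓ y := by
  set φ : ℝ → ℝ := fun t => ℓ (AffineMap.lineMap x y t) with hφ
  have hφconv : ConvexOn ℝ Set.univ φ := by
    have := hconv.comp_affineMap (AffineMap.lineMap x y)
    simpa [hφ, Function.comp_def] using this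
  have hline : HasDerivAt (fun t : ℝ => AffineMap.lineMap x y t) (y - x) 0 := by
    have heq : (fun t : ℝ => AffineMap.lineMap x y t) = fun t : ℝ => t • (y - x) + x := by
      funext t; simp [AffineMap.lineMap_apply]
    rw [heq]
    simpa using ((hasDerivAt_id (0:ℝ)).smul_const (y - x)).add_const x
  have hF : HasFDerivAt ℓ (InnerProductSpace.toDual ℝ E g) x :=
    hasGradientAt_iff_hasFDerivAt.1 hg
  have hder : HasDerivAt φ ⟪g, y - x⟫ 0 := by
    have h0 : AffineMap.lineMap x y (0:ℝ) = x := by simp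
    have hF' : HasFDerivAt ℓ (InnerProductSpace.toDual ℝ E g) (AffineMap.lineMap x y (0:ℝ)) := by
      rw [h0]; exact hF
    have := hF'.comp_hasDerivAt (0:ℝ) hline
    simpa [hφ, InnerProductSpace.toDual_apply_apply, Function.comp_def] using this
  have hslope := hφconv.le_slope_of_hasDerivAt (Set.mem_univ (0:ℝ))
    (Set.mem_univ (1:ℝ)) zero_lt_one hder
  have : slope φ 0 1 = ℓ y - ℓ x := by
    simp [slope, hφ]
  rw [this] at hslope
  linarith

/-- Descent lemma: Lipschitz gradient gives a quadratic bound on the first-order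
Taylor error. -/
lemma descent_abs {f : E → ℝ} {gf : E → E} (hgf : ∀ y, HasGradientAt f (gf y) y)
    {K : ℝ} (hK : 0 ≤ K) (hlip : ∀ y y', ‖gf y - gf y'‖ ≤ K * ‖y - y'‖) (x y : E) :
    |f y - f x - ⟪gf x, y - x⟫| ≤ K / 2 * ‖y - x‖ ^ 2 := by
  set Δ := y - x with hΔ
  have hgfcont : Continuous gf := by
    have : LipschitzWith (Real.toNNReal K) gf := by
      apply LipschitzWith.of_dist_le_mul
      intro a c
      simpa [dist_eq_norm, Real.coe_toNNReal K hK] using hlip a c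
    exact this.continuous
  have hder : ∀ t : ℝ, HasDerivAt (fun s : ℝ => f (x + s • Δ)) ⟪gf (x + t • Δ), Δ⟫ t := by
    intro t
    have hline : HasDerivAt (fun s : ℝ => x + s • Δ) Δ t := by
      simpa using ((hasDerivAt_id t).smul_const Δ).const_add x
    have hF : HasFDerivAt f (InnerProductSpace.toDual ℝ E (gf (x + t • Δ))) (x + t • Δ) :=
      hasGradientAt_iff_hasFDerivAt.1 (hgf _)
    simpa [InnerProductSpace.toDual_apply_apply, Function.comp_def] using hF.comp_hasDerivAt t hline
  have hcont : Continuous fun t : ℝ => ⟪gf (x + t • Δ), Δ⟫ := by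
    apply Continuous.inner
    · exact hgfcont.comp (by continuity)
    · exact continuous_const
  have hint : f y - f x = ∫ t in (0:ℝ)..1, ⟪gf (x + t • Δ), Δ⟫ := by
    have := intervalIntegral.integral_eq_sub_of_hasDerivAt
      (f := fun s : ℝ => f (x + s • Δ)) (a := (0:ℝ)) (b := 1)
      (fun t _ => hder t) (hcont.intervalIntegrable 0 1)
    rw [this]
    simp [hΔ]
  have hsub : f y - f x - ⟪gf x, Δ⟫
      = ∫ t in (0:ℝ)..1, (⟪gf (x + t • Δ), Δ⟫ - ⟪gf x, Δ⟫) := by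
    rw [intervalIntegral.integral_sub (hcont.intervalIntegrable 0 1)
      (intervalIntegrable_const), hint]
    simp
  rw [hsub]
  have hbound : ∀ t ∈ Set.uIoc (0:ℝ) 1,
      ‖⟪gf (x + t • Δ), Δ⟫ - ⟪gf x, Δ⟫‖ ≤ K * ‖Δ‖ ^ 2 * t := by
    intro t ht
    rw [Set.uIoc_of_le (zero_le_one)] at ht
    have ht0 : 0 < t := ht.1
    have ht1 : t ≤ 1 := ht.2
    have : ⟪gf (x + t • Δ), Δ⟫ - ⟪gf x, Δ⟫ = ⟪gf (x + t • Δ) - gf x, Δ⟫ := by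
      rw [inner_sub_left]
    rw [this]
    calc ‖⟪gf (x + t • Δ) - gf x, Δ⟫‖ ≤ ‖gf (x + t • Δ) - gf x‖ * ‖Δ‖ :=
          norm_inner_le_norm _ _
      _ ≤ (K * ‖t • Δ‖) * ‖Δ‖ := by
          apply mul_le_mul_of_nonneg_right _ (norm_nonneg _)
          simpa using hlip (x + t • Δ) x
      _ = K * ‖Δ‖ ^ 2 * t := by
          rw [norm_smul]
          simp [abs_of_pos ht0]
          ring
  have habs := intervalIntegral.norm_integral_le_abs_of_norm_le
    (μ := MeasureTheory.volume) (g := fun t : ℝ => K * ‖Δ‖ ^ 2 * t)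
    (by
      filter_upwards [MeasureTheory.ae_restrict_mem measurableSet_uIoc] with t ht
      exact hbound t ht)
    (by apply Continuous.intervalIntegrable; continuity)
  have hval : (∫ t in (0:ℝ)..1, K * ‖Δ‖ ^ 2 * t) = K / 2 * ‖Δ‖ ^ 2 := by
    rw [intervalIntegral.integral_const_mul, integral_id]
    ring
  calc |∫ t in (0:ℝ)..1, (⟪gf (x + t • Δ), Δ⟫ - ⟪gf x, Δ⟫)|
      ≤ |∫ t in (0:ℝ)..1, K * ‖Δ‖ ^ 2 * t| := by
        simpa [Real.norm_eq_abs] using habs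
    _ = K / 2 * ‖Δ‖ ^ 2 := by rw [hval]; exact abs_of_nonneg (by positivity)

/-- Norm of gradient of a Lipschitz function. -/
lemma grad_norm_le {ℓ : E → ℝ} {L : ℝ} (hL : 0 ≤ L)
    (hlip : ∀ x y, |ℓ x - ℓ y| ≤ L * ‖x - y‖) {g x : E}
    (hg : HasGradientAt ℓ g x) : ‖g‖ ≤ L := by
  have hF : HasFDerivAt ℓ (InnerProductSpace.toDual ℝ E g) x :=
    hasGradientAt_iff_hasFDerivAt.1 hg
  have := hF.le_of_lip' hL (Filter.Eventually.of_forall fun y => by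
    simpa [Real.norm_eq_abs] using hlip y x)
  simpa using this

end aux

/-- a convex `L`-Lipschitz loss composed with coordinatewise
predictors having `(C/b)`-Lipschitz gradients is `(2CLR²/b)`-nearly convex on a
set of (Frobenius) diameter `2R`.  The gradient of the composition has block `i`
equal to `(∂ℓ/∂f_i) • ∇f_i(θ[i])`. -/
theorem stmt_5 {d m p : ℕ} (L C b R : ℝ) (hL : 0 ≤ L) (hC : 0 ≤ C)
    (hb : 0 < b) (hR : 0 ≤ R)
    (ℓ : EuclideanSpace ℝ (Fin d) → ℝ)
    (hconv : ConvexOn ℝ Set.univ ℓ)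
    (hlip : ∀ x y, |ℓ x - ℓ y| ≤ L * ‖x - y‖)
    (gℓ : EuclideanSpace ℝ (Fin d) → EuclideanSpace ℝ (Fin d))
    (hgℓ : ∀ y, HasGradientAt ℓ (gℓ y) y)
    (f : Fin d → EuclideanSpace ℝ (Fin m × Fin p) → ℝ)
    (gf : Fin d → EuclideanSpace ℝ (Fin m × Fin p) → EuclideanSpace ℝ (Fin m × Fin p))
    (hgf : ∀ i y, HasGradientAt (f i) (gf i y) y)
    (hgflip : ∀ i y y', ‖gf i y - gf i y'‖ ≤ (C / b) * ‖y - y'‖)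
    (θ θ' : Fin d → EuclideanSpace ℝ (Fin m × Fin p))
    (hdist : Real.sqrt (∑ i, ‖θ i - θ' i‖ ^ 2) ≤ 2 * R) :
    ℓ (WithLp.toLp 2 (fun i => f i (θ' i))) - ℓ (WithLp.toLp 2 (fun i => f i (θ i))) ≥
      (∑ i, (gℓ (WithLp.toLp 2 (fun j => f j (θ j)))) i * ⟪gf i (θ i), θ' i - θ i⟫) -
        2 * C * L * R ^ 2 / b := by
  set F : EuclideanSpace ℝ (Fin d) := WithLp.toLp 2 (fun i => f i (θ i)) with hF
  set F' : EuclideanSpace ℝ (Fin d) := WithLp.toLp 2 (fun i => f i (θ' i)) with hF'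
  set g : EuclideanSpace ℝ (Fin d) := gℓ F with hgdef
  have h1 : ℓ F + ⟪g, F' - F⟫ ≤ ℓ F' := grad_convex_lb hconv (hgℓ F) F'
  have h2 : ⟪g, F' - F⟫ = ∑ i, g i * (f i (θ' i) - f i (θ i)) := by
    simp [PiLp.inner_apply, RCLike.inner_apply, hF, hF', mul_comm]
  have hgnorm : ‖g‖ ≤ L := grad_norm_le hL hlip (hgℓ F)
  have hcoord : ∀ i, |g i| ≤ L := by
    intro i
    refine le_trans ?_ hgnorm
    rw [EuclideanSpace.norm_eq]
    have h1' : |g i| = Real.sqrt (‖g i‖ ^ 2) := by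
      rw [Real.sqrt_sq_eq_abs]; simp
    rw [h1']
    apply Real.sqrt_le_sqrt
    exact Finset.single_le_sum (f := fun j => ‖g j‖ ^ 2) (fun j _ => by positivity) (Finset.mem_univ i)
  have hdesc : ∀ i, |f i (θ' i) - f i (θ i) - ⟪gf i (θ i), θ' i - θ i⟫|
      ≤ (C / b) / 2 * ‖θ' i - θ i‖ ^ 2 := fun i => by
    simpa [div_div] using
      descent_abs (hgf i) (div_nonneg hC hb.le) (hgflip i) (θ i) (θ' i)
  have hterm : ∀ i ∈ Finset.univ,
      g i * ⟪gf i (θ i), θ' i - θ i⟫ - L * ((C / b) / 2 * ‖θ' i - θ i‖ ^ 2)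
        ≤ g i * (f i (θ' i) - f i (θ i)) := by
    intro i _
    have hE := hdesc i
    set E := f i (θ' i) - f i (θ i) - ⟪gf i (θ i), θ' i - θ i⟫ with hEdef
    have hsplit : f i (θ' i) - f i (θ i) = ⟪gf i (θ i), θ' i - θ i⟫ + E := by
      rw [hEdef]; ring
    have hge : -(L * ((C / b) / 2 * ‖θ' i - θ i‖ ^ 2)) ≤ g i * E := by
      have h3 : |g i * E| ≤ L * ((C / b) / 2 * ‖θ' i - θ i‖ ^ 2) := by
        rw [abs_mul]
        exact mul_le_mul (hcoord i) hE (abs_nonneg _) hL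
      calc -(L * ((C / b) / 2 * ‖θ' i - θ i‖ ^ 2)) ≤ -|g i * E| := by linarith
        _ ≤ g i * E := neg_abs_le _
    rw [hsplit]
    nlinarith [hge]
  have hsum2 : ∑ i, ‖θ' i - θ i‖ ^ 2 ≤ 4 * R ^ 2 := by
    have h0 : (0:ℝ) ≤ ∑ i, ‖θ i - θ' i‖ ^ 2 :=
      Finset.sum_nonneg fun i _ => by positivity
    have hsq : (∑ i, ‖θ i - θ' i‖ ^ 2) ≤ (2 * R) ^ 2 := by
      have := pow_le_pow_left₀ (Real.sqrt_nonneg _) hdist 2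
      rwa [Real.sq_sqrt h0] at this
    have : ∑ i, ‖θ' i - θ i‖ ^ 2 = ∑ i, ‖θ i - θ' i‖ ^ 2 := by
      congr 1; funext i; rw [norm_sub_rev]
    rw [this]; nlinarith
  have hS := Finset.sum_le_sum hterm
  rw [Finset.sum_sub_distrib] at hS
  have hconstsum : ∑ i, L * ((C / b) / 2 * ‖θ' i - θ i‖ ^ 2)
      ≤ 2 * C * L * R ^ 2 / b := by
    rw [← Finset.mul_sum, ← Finset.mul_sum]
    have hnn : (0:ℝ) ≤ L * ((C / b) / 2) := by positivity
    calc L * ((C / b) / 2 * ∑ i, ‖θ' i - θ i‖ ^ 2)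
        ≤ L * ((C / b) / 2 * (4 * R ^ 2)) := by
          apply mul_le_mul_of_nonneg_left _ hL
          apply mul_le_mul_of_nonneg_left hsum2 (by positivity)
      _ = 2 * C * L * R ^ 2 / b := by field_simp; ring
  rw [ge_iff_le]
  calc (∑ i, g i * ⟪gf i (θ i), θ' i - θ i⟫) - 2 * C * L * R ^ 2 / b
      ≤ (∑ i, g i * ⟪gf i (θ i), θ' i - θ i⟫)
          - ∑ i, L * ((C / b) / 2 * ‖θ' i - θ i‖ ^ 2) := by linarith
    _ ≤ ∑ i, g i * (f i (θ' i) - f i (θ i)) := hS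
    _ = ⟪g, F' - F⟫ := h2.symm
    _ ≤ ℓ F' - ℓ F := by linarith
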